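/- Let a be an invertible m×m matrix, μ₁, …, μ_K distinct reals, and Q_s orthogonal projections onto subspaces F_s ⊆ ℂ^m such that there is no nonzero ℂ^m-valued polynomial G of degree ≤ p−2 with Q_s G(μ_s) = 0 for all s. Let Q̃_s be the orthogonal projection onto (aᴴ F_s^⊥)^⊥. Then there is no nonzero ℂ^m-valued polynomial G of degree ≤ p−2 with Q̃_s G(μ_s) = 0 for all s; i.e., the tameness property is preserved under the transformation F_s ↦ (aᴴ F_s^⊥)^⊥. -/
import Mathlib


open Matrix Finset

/-- Tameness is preserved under the transformation `F s ↦ (aᴴ F sᗮ)ᗮ`: if there is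
no nonzero `ℂ^m`-valued polynomial `G` of degree `≤ p − 2` with `Q s G(μ s) = 0`
for all `s` (where `Q s` is the orthogonal projection onto `F s`, so
`Ker Q s = F sᗮ`), then the same holds with the orthogonal projections `Q̃ s` onto
`(aᴴ F sᗮ)ᗮ` (whose kernels are `aᴴ F sᗮ`). -/
theorem tame_transform (m p K : ℕ) (a : Matrix (Fin m) (Fin m) ℂ)
    (ha : IsUnit a) (mu : Fin K → ℝ) (hmu : Function.Injective mu)
    (Q Qt : Fin K → Matrix (Fin m) (Fin m) ℂ)
    (hQherm : ∀ s, (Q s)ᴴ = Q s) (hQidem : ∀ s, Q s * Q s = Q s)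
    (hQtherm : ∀ s, (Qt s)ᴴ = Qt s) (hQtidem : ∀ s, Qt s * Qt s = Qt s)
    (hQtker : ∀ s (x : Fin m → ℂ),
      Qt s *ᵥ x = 0 ↔ ∃ v : Fin m → ℂ, Q s *ᵥ v = 0 ∧ x = aᴴ *ᵥ v)
    (htame : ∀ G : Fin (p - 1) → Fin m → ℂ,
      (∀ s, Q s *ᵥ (∑ t : Fin (p - 1), ((mu s : ℂ) ^ (t : ℕ)) • G t) = 0) → G = 0) :
    ∀ G : Fin (p - 1) → Fin m → ℂ,
      (∀ s, Qt s *ᵥ (∑ t : Fin (p - 1), ((mu s : ℂ) ^ (t : ℕ)) • G t) = 0) → G = 0 := by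
  intro G hG
  have hdet : IsUnit a.det := (isUnit_iff_isUnit_det a).mp ha
  have hinv : a⁻¹ * a = 1 := nonsing_inv_mul a hdet
  set G' : Fin (p - 1) → Fin m → ℂ := fun t => (a⁻¹)ᴴ *ᵥ G t with hG'
  have hid : ∀ x : Fin m → ℂ, aᴴ *ᵥ ((a⁻¹)ᴴ *ᵥ x) = x := by
    intro x
    rw [mulVec_mulVec, ← conjTranspose_mul, hinv, conjTranspose_one, one_mulVec]
  have key : ∀ s, Q s *ᵥ (∑ t : Fin (p - 1), ((mu s : ℂ) ^ (t : ℕ)) • G' t) = 0 := by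
    intro s
    obtain ⟨v, hv, hx⟩ := (hQtker s _).mp (hG s)
    have hsum : (∑ t : Fin (p - 1), ((mu s : ℂ) ^ (t : ℕ)) • G' t) = v := by
      have h1 : (∑ t : Fin (p - 1), ((mu s : ℂ) ^ (t : ℕ)) • G' t)
          = (a⁻¹)ᴴ.mulVecLin (∑ t : Fin (p - 1), ((mu s : ℂ) ^ (t : ℕ)) • G t) := by
        rw [map_sum]
        simp [hG', mulVecLin]
      rw [h1, hx]
      show (a⁻¹)ᴴ *ᵥ (aᴴ *ᵥ v) = v
      rw [mulVec_mulVec, ← conjTranspose_mul, mul_nonsing_inv a hdet,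
        conjTranspose_one, one_mulVec]
    rw [hsum, hv]
  have h0 := htame G' key
  funext t i
  have : G t = aᴴ *ᵥ G' t := (hid (G t)).symm
  rw [this, h0]
  simp [mulVec]
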